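/- Let n = 2k+1 with k ≥ 1 and let 1 ≤ r ≤ k. For every subset A of S with |A| = k, ∑_{i ∈ S∖A} f(A ∪ {i}) = (k+1−r) · f(A). -/

import Mathlib

open Finset

/-- Let `n = 2k+1` with `k ≥ 1`, `S = {1,…,n}` (modeled as `Fin n`), `1 ≤ r ≤ k`, and
let `g` assign a real number to each `r`-subset of `S` such that for every
`(r−1)`-subset `R` of `S`, `∑_{i ∈ S∖R} g(R ∪ {i}) = 0`. With
`f(A) = ∑_{B ⊆ A, |B| = r} g(B)`: for every `A ⊆ S` with `|A| = k`,
`∑_{i ∈ S∖A} f(A ∪ {i}) = (k+1−r)·f(A)`. -/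
theorem sum_neighbors_lower (k r : ℕ) (hk : 1 ≤ k) (hr : 1 ≤ r) (hrk : r ≤ k)
    (g : Finset (Fin (2 * k + 1)) → ℝ)
    (hg : ∀ R : Finset (Fin (2 * k + 1)), R.card = r - 1 →
      ∑ i ∈ Rᶜ, g (insert i R) = 0)
    (A : Finset (Fin (2 * k + 1))) (hA : A.card = k) :
    (∑ i ∈ Aᶜ, ∑ B ∈ (insert i A).powersetCard r, g B) =
      ((k : ℝ) + 1 - r) * ∑ B ∈ A.powersetCard r, g B := by
  obtain ⟨r', rfl⟩ : ∃ r', r = r' + 1 := ⟨r - 1, (Nat.succ_pred_eq_of_pos hr).symm⟩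
  set f : ℝ := ∑ B ∈ A.powersetCard (r' + 1), g B with hf
  -- split each inner sum
  have hsplit : ∀ i ∈ Aᶜ, ∑ B ∈ (insert i A).powersetCard (r' + 1), g B
      = f + ∑ B ∈ A.powersetCard r', g (insert i B) := by
    intro i hi
    have hiA : i ∉ A := mem_compl.mp hi
    rw [powersetCard_succ_insert hiA, sum_union, sum_image]
    · intro B hB C hC hBC
      have hiB : i ∉ B := fun h => hiA ((mem_powersetCard.mp hB).1 h)
      have hiC : i ∉ C := fun h => hiA ((mem_powersetCard.mp hC).1 h)
      rw [← erase_insert hiB, ← erase_insert hiC, hBC]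
    · rw [disjoint_left]
      intro B hB hB'
      obtain ⟨C, hC, rfl⟩ := mem_image.mp hB'
      exact hiA ((mem_powersetCard.mp hB).1 (mem_insert_self i C))
  rw [Finset.sum_congr rfl hsplit, sum_add_distrib, sum_const, card_compl, hA,
    Fintype.card_fin]
  have hcard : 2 * k + 1 - k = k + 1 := by omega
  rw [hcard]
  -- swap sums
  rw [Finset.sum_comm]
  -- for each B ⊆ A of card r', sum over i ∈ Aᶜ equals minus sum over A \ B
  have hinner : ∀ B ∈ A.powersetCard r',
      ∑ i ∈ Aᶜ, g (insert i B) = - ∑ i ∈ A \ B, g (insert i B) := by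
    intro B hB
    obtain ⟨hBA, hBc⟩ := mem_powersetCard.mp hB
    have h0 : ∑ i ∈ Bᶜ, g (insert i B) = 0 := by
      apply hg; simpa using hBc
    have hBc' : Bᶜ = Aᶜ ∪ (A \ B) := by
      ext x; simp only [mem_compl, mem_union, mem_sdiff]
      by_cases hx : x ∈ A <;> [skip; simp [hx, fun h => hx (hBA h)]] <;> tauto
    have hdisj : Disjoint (Aᶜ) (A \ B) := by
      rw [disjoint_left]; intro x hx hx'; exact (mem_compl.mp hx) (mem_sdiff.mp hx').1
    rw [hBc', sum_union hdisj] at h0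
    linarith
  rw [Finset.sum_congr rfl hinner, sum_neg_distrib]
  -- double counting: ∑_{B ∈ powersetCard r' A} ∑_{i ∈ A\B} g (insert i B) = (r'+1) * f
  have hdc : ∑ B ∈ A.powersetCard r', ∑ i ∈ A \ B, g (insert i B)
      = ((r' : ℝ) + 1) * f := by
    rw [Finset.sum_sigma']
    have : ((r' : ℝ) + 1) * f = ∑ C ∈ A.powersetCard (r' + 1), ∑ i ∈ C, g C := by
      rw [hf, mul_sum]
      refine Finset.sum_congr rfl fun C hC => ?_
      rw [sum_const, (mem_powersetCard.mp hC).2]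
      ring
    rw [this, Finset.sum_sigma']
    apply Finset.sum_nbij' (i := fun p => ⟨insert p.2 p.1, p.2⟩)
      (j := fun p => ⟨p.1.erase p.2, p.2⟩)
    · rintro ⟨B, i⟩ hp
      simp only [mem_sigma, mem_powersetCard, mem_sdiff] at hp ⊢
      obtain ⟨⟨hBA, hBc⟩, hiA, hiB⟩ := hp
      exact ⟨⟨insert_subset hiA hBA, by rw [card_insert_of_notMem hiB, hBc]⟩,
        mem_insert_self _ _⟩
    · rintro ⟨C, i⟩ hp
      simp only [mem_sigma, mem_powersetCard, mem_sdiff] at hp ⊢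
      obtain ⟨⟨hCA, hCc⟩, hiC⟩ := hp
      refine ⟨⟨(erase_subset _ _).trans hCA, ?_⟩, hCA hiC, notMem_erase _ _⟩
      rw [card_erase_of_mem hiC, hCc]; rfl
    · rintro ⟨B, i⟩ hp
      simp only [mem_sigma, mem_powersetCard, mem_sdiff] at hp
      simp [erase_insert hp.2.2]
    · rintro ⟨C, i⟩ hp
      simp only [mem_sigma, mem_powersetCard, mem_sdiff] at hp
      simp [insert_erase hp.2]
    · rintro ⟨B, i⟩ hp
      simp only [mem_sigma, mem_powersetCard, mem_sdiff] at hp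
      simp
  rw [hdc]
  push_cast
  ring
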